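/- If P and Q are orthogonal projections on H with P − Q trace class, then the operator QP : range P → range Q (the generalized Toeplitz operator) is Fredholm. -/

import Mathlib

open scoped ComplexConjugate

namespace Pap

noncomputable section

variable {E F : Type*}
  [NormedAddCommGroup E] [InnerProductSpace ℂ E]
  [NormedAddCommGroup F] [InnerProductSpace ℂ F]

/-- Nuclear (= trace-class on Hilbert space) operator: it admits a decomposition
`A x = ∑ cₙ ⟪vₙ, x⟫ uₙ` with `∑ |cₙ| < ∞` and unit-norm vectors `uₙ, vₙ`. -/
def IsTraceClass (A : E →L[ℂ] F) : Prop :=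
  ∃ (c : ℕ → ℂ) (u : ℕ → F) (v : ℕ → E),
    Summable (fun n => ‖c n‖) ∧ (∀ n, ‖u n‖ ≤ 1) ∧ (∀ n, ‖v n‖ ≤ 1) ∧
    ∀ x, A x = ∑' n, c n • ((inner ℂ (v n) x : ℂ) • u n)

/-- Trace norm: the infimum of `∑ |cₙ|` over all such decompositions. -/
def traceNorm (A : E →L[ℂ] F) : ℝ :=
  sInf { t : ℝ | ∃ (c : ℕ → ℂ) (u : ℕ → F) (v : ℕ → E),
    Summable (fun n => ‖c n‖) ∧ (∀ n, ‖u n‖ ≤ 1) ∧ (∀ n, ‖v n‖ ≤ 1) ∧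
    (∀ x, A x = ∑' n, c n • ((inner ℂ (v n) x : ℂ) • u n)) ∧ t = ∑' n, ‖c n‖ }

open Classical in
/-- The trace, computed from a chosen nuclear decomposition. -/
def trace (A : E →L[ℂ] E) : ℂ :=
  if h : IsTraceClass A then
    ∑' n, h.choose n *
      (inner ℂ (h.choose_spec.choose_spec.choose n) (h.choose_spec.choose n) : ℂ)
  else 0

end

end Pap

namespace Pap

/-- The generalized Toeplitz operator `(P,Q) = Q∘P : range P → range Q`. -/
noncomputable def toeplitz {H : Type*} [NormedAddCommGroup H] [InnerProductSpace ℂ H]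
    (P Q : H →L[ℂ] H) : (LinearMap.range (P : H →ₗ[ℂ] H)) →L[ℂ] (LinearMap.range (Q : H →ₗ[ℂ] H)) :=
  (Q.comp (Submodule.subtypeL (LinearMap.range (P : H →ₗ[ℂ] H)))).codRestrict (LinearMap.range (Q : H →ₗ[ℂ] H))
    (fun x => LinearMap.mem_range_self (Q : H →ₗ[ℂ] H) _)

/-- Fredholm: finite-dimensional kernel and cokernel. -/
def IsFredholm {X Y : Type*} [NormedAddCommGroup X] [NormedAddCommGroup Y]
    [NormedSpace ℂ X] [NormedSpace ℂ Y] (T : X →L[ℂ] Y) : Prop :=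
  FiniteDimensional ℂ (LinearMap.ker (T : X →ₗ[ℂ] Y)) ∧ FiniteDimensional ℂ (Y ⧸ LinearMap.range (T : X →ₗ[ℂ] Y))

end Pap

namespace Pap7Aux

lemma proj_norm_le {H : Type*} [NormedAddCommGroup H] [InnerProductSpace ℂ H]
    (P : H →L[ℂ] H) (hP2 : P.comp P = P)
    (hPsa : ∀ x y : H, (inner ℂ (P x) y : ℂ) = inner ℂ x (P y)) (w : H) : ‖P w‖ ≤ ‖w‖ := by
  have h2 : P (P w) = P w := ContinuousLinearMap.ext_iff.mp hP2 w
  have h1 : (inner ℂ (P w) (P w) : ℂ) = inner ℂ w (P w) := by rw [hPsa w (P w), h2]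
  have h3 : (‖P w‖ : ℂ) ^ 2 = inner ℂ w (P w) := by
    rw [← h1, inner_self_eq_norm_sq_to_K]; norm_cast
  have h4 : ‖P w‖ ^ 2 ≤ ‖w‖ * ‖P w‖ := by
    calc ‖P w‖ ^ 2 = ‖(‖P w‖ : ℂ) ^ 2‖ := by simp [norm_pow]
      _ = ‖(inner ℂ w (P w) : ℂ)‖ := by rw [h3]
      _ ≤ ‖w‖ * ‖P w‖ := norm_inner_le_norm _ _
  nlinarith [norm_nonneg (P w), norm_nonneg w]

lemma mem_range_iff {H : Type*} [NormedAddCommGroup H] [InnerProductSpace ℂ H]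
    (P : H →L[ℂ] H) (hP2 : P.comp P = P) (x : H) :
    x ∈ LinearMap.range (P : H →ₗ[ℂ] H) ↔ P x = x := by
  constructor
  · rintro ⟨y, rfl⟩
    exact ContinuousLinearMap.ext_iff.mp hP2 y
  · intro h
    exact ⟨x, h⟩

lemma range_closed {H : Type*} [NormedAddCommGroup H] [InnerProductSpace ℂ H]
    (P : H →L[ℂ] H) (hP2 : P.comp P = P) :
    IsClosed ((LinearMap.range (P : H →ₗ[ℂ] H) : Submodule ℂ H) : Set H) := by
  have : ((LinearMap.range (P : H →ₗ[ℂ] H) : Submodule ℂ H) : Set H) = {x : H | P x = x} := by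
    ext x
    simpa using mem_range_iff P hP2 x
  rw [this]
  exact isClosed_eq P.continuous continuous_id

end Pap7Aux

set_option maxHeartbeats 1000000

/-- If `P, Q` are orthogonal projections on a separable Hilbert space `H` with
`P − Q` trace class, then the generalized Toeplitz operator `QP : range P → range Q`
is Fredholm. -/
theorem toeplitz_isFredholm
    {H : Type*} [NormedAddCommGroup H] [InnerProductSpace ℂ H] [CompleteSpace H]
    [TopologicalSpace.SeparableSpace H]
    (P Q : H →L[ℂ] H)
    (hP2 : P.comp P = P) (hPsa : ∀ x y : H, (inner ℂ (P x) y : ℂ) = inner ℂ x (P y))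
    (hQ2 : Q.comp Q = Q) (hQsa : ∀ x y : H, (inner ℂ (Q x) y : ℂ) = inner ℂ x (Q y))
    (htc : Pap.IsTraceClass (P - Q)) :
    Pap.IsFredholm (Pap.toeplitz P Q) := by
  classical
  obtain ⟨c, u, v, hc, hu, hv, hA⟩ := htc
  have hPn := Pap7Aux.proj_norm_le P hP2 hPsa
  have hQn := Pap7Aux.proj_norm_le Q hQ2 hQsa
  -- pointwise summability
  have hsum : ∀ x : H, Summable (fun n => c n • ((inner ℂ (v n) x : ℂ) • u n)) := by
    intro x
    apply Summable.of_norm_bounded (hc.mul_right ‖x‖)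
    intro n
    have h1 : ‖(inner ℂ (v n) x : ℂ)‖ ≤ ‖x‖ := by
      calc ‖(inner ℂ (v n) x : ℂ)‖ ≤ ‖v n‖ * ‖x‖ := norm_inner_le_norm _ _
        _ ≤ 1 * ‖x‖ := by
            exact mul_le_mul_of_nonneg_right (hv n) (norm_nonneg x)
        _ = ‖x‖ := one_mul _
    calc ‖c n • ((inner ℂ (v n) x : ℂ) • u n)‖
        = ‖c n‖ * (‖(inner ℂ (v n) x : ℂ)‖ * ‖u n‖) := by simp [norm_smul]
      _ ≤ ‖c n‖ * (‖x‖ * 1) := by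
          apply mul_le_mul_of_nonneg_left _ (norm_nonneg (c n))
          exact mul_le_mul h1 (hu n) (norm_nonneg _) (norm_nonneg x)
      _ = ‖c n‖ * ‖x‖ := by ring
  -- choose N with small tail
  obtain ⟨N, hN⟩ : ∃ N : ℕ, (∑' n, ‖c (n + N)‖) < 1 / 2 := by
    have := (tendsto_sum_nat_add (fun n => ‖c n‖)).eventually_lt_const
      (show (0:ℝ) < 1/2 by norm_num)
    exact this.exists
  have htail_nonneg : (0:ℝ) ≤ ∑' n, ‖c (n + N)‖ := tsum_nonneg fun n => norm_nonneg _
  -- finite rank piece and remainder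
  set AN : H →L[ℂ] H :=
    ∑ n ∈ Finset.range N, c n • ((innerSL ℂ (v n)).smulRight (u n)) with hANdef
  have hANapp : ∀ x : H, AN x = ∑ n ∈ Finset.range N, c n • ((inner ℂ (v n) x : ℂ) • u n) := by
    intro x
    rw [hANdef]
    simp [ContinuousLinearMap.sum_apply]
  set R0 : H →L[ℂ] H := (P - Q) - AN with hR0def
  have hR0app : ∀ x : H, R0 x = (P - Q) x - AN x := fun x => rfl
  have hDapp : ∀ x : H, (P - Q) x = AN x + R0 x := by
    intro x; rw [hR0app]; abel
  have hR0norm : ∀ x : H, ‖R0 x‖ ≤ (1/2) * ‖x‖ := by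
    intro x
    have hsx := hsum x
    have hsplit := Summable.sum_add_tsum_nat_add N hsx
    have h1 : R0 x = ∑' n, c (n + N) • ((inner ℂ (v (n + N)) x : ℂ) • u (n + N)) := by
      rw [hR0app, hA, hANapp, ← hsplit]
      ring_nf
      abel
    have h3 : ∀ n : ℕ, ‖c (n + N) • ((inner ℂ (v (n + N)) x : ℂ) • u (n + N))‖
        ≤ ‖c (n + N)‖ * ‖x‖ := by
      intro n
      have h1' : ‖(inner ℂ (v (n + N)) x : ℂ)‖ ≤ ‖x‖ := by
        calc ‖(inner ℂ (v (n + N)) x : ℂ)‖ ≤ ‖v (n + N)‖ * ‖x‖ := norm_inner_le_norm _ _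
          _ ≤ 1 * ‖x‖ := mul_le_mul_of_nonneg_right (hv _) (norm_nonneg x)
          _ = ‖x‖ := one_mul _
      calc ‖c (n + N) • ((inner ℂ (v (n + N)) x : ℂ) • u (n + N))‖
          = ‖c (n + N)‖ * (‖(inner ℂ (v (n + N)) x : ℂ)‖ * ‖u (n + N)‖) := by simp [norm_smul]
        _ ≤ ‖c (n + N)‖ * (‖x‖ * 1) := by
            apply mul_le_mul_of_nonneg_left _ (norm_nonneg _)
            exact mul_le_mul h1' (hu _) (norm_nonneg _) (norm_nonneg x)
        _ = ‖c (n + N)‖ * ‖x‖ := by ring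
    have hsumtail : Summable (fun n => ‖c (n + N) • ((inner ℂ (v (n + N)) x : ℂ) • u (n + N))‖) :=
      Summable.of_nonneg_of_le (fun n => norm_nonneg _) h3
        ((hc.comp_injective (add_left_injective N)).mul_right _)
    have h2 : ‖R0 x‖ ≤ ∑' n, ‖c (n + N) • ((inner ℂ (v (n + N)) x : ℂ) • u (n + N))‖ := by
      rw [h1]; exact norm_tsum_le_tsum_norm hsumtail
    have h4 : (∑' n, ‖c (n + N) • ((inner ℂ (v (n + N)) x : ℂ) • u (n + N))‖)
        ≤ ∑' n, ‖c (n + N)‖ * ‖x‖ := by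
      apply Summable.tsum_le_tsum h3 hsumtail
      exact (hc.comp_injective (add_left_injective N)).mul_right _
    have h5 : (∑' n, ‖c (n + N)‖ * ‖x‖) = (∑' n, ‖c (n + N)‖) * ‖x‖ := tsum_mul_right
    have := h2.trans (h4.trans_eq h5)
    calc ‖R0 x‖ ≤ (∑' n, ‖c (n + N)‖) * ‖x‖ := this
      _ ≤ (1/2) * ‖x‖ := mul_le_mul_of_nonneg_right hN.le (norm_nonneg x)
  refine ⟨?_, ?_⟩
  · -- kernel is finite-dimensional
    let ψ : LinearMap.ker (Pap.toeplitz P Q : LinearMap.range (P : H →ₗ[ℂ] H) →ₗ[ℂ] LinearMap.range (Q : H →ₗ[ℂ] H)) →ₗ[ℂ] (Fin N → ℂ) :=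
      { toFun := fun x i => c i * (inner ℂ (v i) ((x : LinearMap.range (P : H →ₗ[ℂ] H)) : H) : ℂ)
        map_add' := by
          intro a b; funext i
          simp [inner_add_right, mul_add]
        map_smul' := by
          intro a b; funext i
          simp [inner_smul_right]
          ring }
    have hinj : Function.Injective ψ := by
      rw [injective_iff_map_eq_zero]
      intro x hx
      set xH : H := ((x : LinearMap.range (P : H →ₗ[ℂ] H)) : H) with hxH
      have hxker : Pap.toeplitz P Q (x : LinearMap.range (P : H →ₗ[ℂ] H)) = 0 := x.2
      have hQx : Q xH = 0 := congrArg Subtype.val hxker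
      have hPx : P xH = xH := (Pap7Aux.mem_range_iff P hP2 xH).mp (x : LinearMap.range (P : H →ₗ[ℂ] H)).2
      have hcoef : ∀ i : Fin N, c i * (inner ℂ (v i) xH : ℂ) = 0 := fun i => congrFun hx i
      have hANx : AN xH = 0 := by
        rw [hANapp]
        apply Finset.sum_eq_zero
        intro n hn
        have h0 : c n * (inner ℂ (v n) xH : ℂ) = 0 := hcoef ⟨n, Finset.mem_range.mp hn⟩
        rw [smul_smul, h0, zero_smul]
      have hx1 : xH = P (R0 xH) := by
        have h1 : P ((P - Q) xH) = xH := by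
          simp [map_sub, hQx, hPx]
        have h2 : (P - Q) xH = R0 xH := by rw [hDapp, hANx, zero_add]
        rw [h2] at h1
        exact h1.symm
      have hle : ‖xH‖ ≤ (1/2) * ‖xH‖ := by
        calc ‖xH‖ = ‖P (R0 xH)‖ := by rw [← hx1]
          _ ≤ ‖R0 xH‖ := hPn _
          _ ≤ (1/2) * ‖xH‖ := hR0norm _
      have hx0 : xH = 0 := by
        have h0 : ‖xH‖ ≤ 0 := by linarith
        exact norm_le_zero_iff.mp h0
      apply Subtype.ext
      apply Subtype.ext
      exact hx0
    exact FiniteDimensional.of_injective ψ hinj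
  · -- cokernel is finite-dimensional
    haveI : CompleteSpace (LinearMap.range (Q : H →ₗ[ℂ] H)) := (Pap7Aux.range_closed Q hQ2).completeSpace_coe
    let M : (LinearMap.range (Q : H →ₗ[ℂ] H)) →L[ℂ] (LinearMap.range (Q : H →ₗ[ℂ] H)) :=
      ((Q.comp R0).comp (Submodule.subtypeL (LinearMap.range (Q : H →ₗ[ℂ] H)))).codRestrict
        (LinearMap.range (Q : H →ₗ[ℂ] H)) (fun z => LinearMap.mem_range_self (Q : H →ₗ[ℂ] H) _)
    have hMnorm : ‖M‖ ≤ 1/2 := by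
      apply ContinuousLinearMap.opNorm_le_bound _ (by norm_num)
      intro z
      calc ‖M z‖ = ‖Q (R0 (z : H))‖ := rfl
        _ ≤ ‖R0 (z : H)‖ := hQn _
        _ ≤ (1/2) * ‖(z : H)‖ := hR0norm _
        _ = (1/2) * ‖z‖ := rfl
    have hMn : ‖-M‖ < 1 := by
      have hne : ‖-M‖ = ‖M‖ := norm_neg M
      linarith
    let e : ((LinearMap.range (Q : H →ₗ[ℂ] H)) →L[ℂ] (LinearMap.range (Q : H →ₗ[ℂ] H)))ˣ := Units.oneSub (-M) hMn
    let G : (LinearMap.range (Q : H →ₗ[ℂ] H)) →L[ℂ] (LinearMap.range (Q : H →ₗ[ℂ] H)) :=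
      ((Q.comp AN).comp (Submodule.subtypeL (LinearMap.range (Q : H →ₗ[ℂ] H)))).codRestrict
        (LinearMap.range (Q : H →ₗ[ℂ] H)) (fun z => LinearMap.mem_range_self (Q : H →ₗ[ℂ] H) _)
    have key : ∀ z : LinearMap.range (Q : H →ₗ[ℂ] H),
        (Pap.toeplitz P Q) ((Pap.toeplitz Q P) z) = (1 + M) z + G z := by
      intro z
      apply Subtype.ext
      have hQz : Q (z : H) = (z : H) := (Pap7Aux.mem_range_iff Q hQ2 _).mp z.2
      show Q (P (z : H)) = ((z : H) + Q (R0 (z : H))) + Q (AN (z : H))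
      have h1 : Q (R0 (z : H)) + Q (AN (z : H)) = Q ((P - Q) (z : H)) := by
        rw [← map_add]
        congr 1
        rw [hR0app]
        abel
      have h2 : Q ((P - Q) (z : H)) = Q (P (z : H)) - (z : H) := by
        have h3 : (P - Q) (z : H) = P (z : H) - Q (z : H) := rfl
        rw [h3, map_sub]
        simp only [hQz]
      rw [add_assoc, h1, h2]
      abel
    let yu : Fin N → (LinearMap.range (Q : H →ₗ[ℂ] H)) := fun i => ⟨Q (u i), LinearMap.mem_range_self (Q : H →ₗ[ℂ] H) _⟩
    let Φ0 : (Fin N → ℂ) →ₗ[ℂ] (LinearMap.range (Q : H →ₗ[ℂ] H)) :=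
      { toFun := fun g => ∑ i, g i • yu i
        map_add' := by intro a b; simp [add_smul, Finset.sum_add_distrib]
        map_smul' := by intro a b; simp [smul_smul, Finset.smul_sum] }
    let Φ := (LinearMap.range (Pap.toeplitz P Q : LinearMap.range (P : H →ₗ[ℂ] H) →ₗ[ℂ] LinearMap.range (Q : H →ₗ[ℂ] H))).mkQ.comp Φ0
    have hsurj : Function.Surjective Φ := by
      intro q
      obtain ⟨y, rfl⟩ := Submodule.mkQ_surjective _ q
      set z : LinearMap.range (Q : H →ₗ[ℂ] H) := (↑e⁻¹ : (LinearMap.range (Q : H →ₗ[ℂ] H)) →L[ℂ] (LinearMap.range (Q : H →ₗ[ℂ] H))) y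
        with hzdef
      have hyz : (1 + M) z = y := by
        have h := congrArg (fun f : (LinearMap.range (Q : H →ₗ[ℂ] H)) →L[ℂ] (LinearMap.range (Q : H →ₗ[ℂ] H)) => f y)
          e.mul_inv
        simp only [ContinuousLinearMap.mul_apply, ContinuousLinearMap.one_apply] at h
        have he : (e : (LinearMap.range (Q : H →ₗ[ℂ] H)) →L[ℂ] (LinearMap.range (Q : H →ₗ[ℂ] H))) = 1 + M := by
          show (1 : (LinearMap.range (Q : H →ₗ[ℂ] H)) →L[ℂ] (LinearMap.range (Q : H →ₗ[ℂ] H))) - (-M) = 1 + M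
          rw [sub_neg_eq_add]
        rw [he] at h
        exact h
      have hy : y = (Pap.toeplitz P Q) ((Pap.toeplitz Q P) z) - G z := by
        rw [key z, ← hyz]
        abel
      refine ⟨fun i => -(c i * (inner ℂ (v i) (z : H) : ℂ)), ?_⟩
      have hG : Φ0 (fun i => -(c i * (inner ℂ (v i) (z : H) : ℂ))) = - G z := by
        apply Subtype.ext
        have hterm : ∀ n : ℕ,
            Q (c n • ((inner ℂ (v n) (z : H) : ℂ) • u n)) = (c n * inner ℂ (v n) (z : H)) • Q (u n) := by
          intro n
          rw [map_smul, map_smul, smul_smul]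
        calc (Φ0 (fun i => -(c i * (inner ℂ (v i) (z : H) : ℂ))) : H)
            = ∑ i : Fin N, (-(c i * (inner ℂ (v i) (z : H) : ℂ))) • Q (u i) := by
              simp [Φ0, yu]
          _ = -∑ i : Fin N, (c i * (inner ℂ (v i) (z : H) : ℂ)) • Q (u i) := by
              simp [neg_smul, Finset.sum_neg_distrib]
          _ = -∑ n ∈ Finset.range N, (c n * (inner ℂ (v n) (z : H) : ℂ)) • Q (u n) := by
              rw [Fin.sum_univ_eq_sum_range (fun n => (c n * (inner ℂ (v n) (z : H) : ℂ)) • Q (u n)) N]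
          _ = -(Q (AN (z : H))) := by
              rw [hANapp, map_sum]
              congr 1
              exact Finset.sum_congr rfl fun n _ => (hterm n).symm
          _ = ((- G z : LinearMap.range (Q : H →ₗ[ℂ] H)) : H) := rfl
      have hmem : (Pap.toeplitz P Q) ((Pap.toeplitz Q P) z) ∈ LinearMap.range (Pap.toeplitz P Q : LinearMap.range (P : H →ₗ[ℂ] H) →ₗ[ℂ] LinearMap.range (Q : H →ₗ[ℂ] H)) :=
        ⟨(Pap.toeplitz Q P) z, rfl⟩
      calc Φ (fun i => -(c i * (inner ℂ (v i) (z : H) : ℂ)))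
          = (LinearMap.range (Pap.toeplitz P Q : LinearMap.range (P : H →ₗ[ℂ] H) →ₗ[ℂ] LinearMap.range (Q : H →ₗ[ℂ] H))).mkQ (- G z) := by
            show (LinearMap.range (Pap.toeplitz P Q : LinearMap.range (P : H →ₗ[ℂ] H) →ₗ[ℂ] LinearMap.range (Q : H →ₗ[ℂ] H))).mkQ
              (Φ0 (fun i => -(c i * (inner ℂ (v i) (z : H) : ℂ)))) = _
            rw [hG]
        _ = (LinearMap.range (Pap.toeplitz P Q : LinearMap.range (P : H →ₗ[ℂ] H) →ₗ[ℂ] LinearMap.range (Q : H →ₗ[ℂ] H))).mkQ y := by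
            rw [hy, map_sub, map_neg]
            have h0 : (LinearMap.range (Pap.toeplitz P Q : LinearMap.range (P : H →ₗ[ℂ] H) →ₗ[ℂ] LinearMap.range (Q : H →ₗ[ℂ] H))).mkQ
                ((Pap.toeplitz P Q) ((Pap.toeplitz Q P) z)) = 0 := by
              rw [Submodule.mkQ_apply, Submodule.Quotient.mk_eq_zero]
              exact hmem
            rw [h0]
            abel
    exact Module.Finite.of_surjective Φ hsurj
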